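/- Let e be a 3×3 real matrix and b = I + 2·e, let J, λ, μ₁, μ₂ be real numbers, and write I₁(A) = trace(A). Then (λ/2)·(J² − 1)·I + μ₁·(b − I) + μ₂·(I₁(b)·b − 2·I − b·b) = (λ/2)·(J − 1)·((J − 1) + 2)·I + 2·(μ₁ + 2·μ₂)·e + 2·μ₂·(I₁(e)·I − e)·b. -/
import Mathlib

theorem stmt_10 (e b : Matrix (Fin 3) (Fin 3) ℝ)
    (hb : b = 1 + (2 : ℝ) • e)
    (J lam mu₁ mu₂ : ℝ)
    (I₁ : Matrix (Fin 3) (Fin 3) ℝ → ℝ)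
    (hI₁ : ∀ A, I₁ A = Matrix.trace A) :
    (lam / 2 * (J ^ 2 - 1)) • (1 : Matrix (Fin 3) (Fin 3) ℝ) + mu₁ • (b - 1)
        + mu₂ • (I₁ b • b - (2 : ℝ) • (1 : Matrix (Fin 3) (Fin 3) ℝ) - b * b)
      = (lam / 2 * ((J - 1) * ((J - 1) + 2))) • (1 : Matrix (Fin 3) (Fin 3) ℝ)
        + (2 * (mu₁ + 2 * mu₂)) • e
        + (2 * mu₂) • ((I₁ e • (1 : Matrix (Fin 3) (Fin 3) ℝ) - e) * b) := by
  subst hb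
  simp only [hI₁, Matrix.trace_add, Matrix.trace_smul, Matrix.trace_one, smul_eq_mul]
  ext i j
  simp [Matrix.mul_apply, Matrix.one_apply, Fin.sum_univ_three, Matrix.trace,
    Matrix.diag, Fin.sum_univ_three, mul_add, add_mul]
  fin_cases i <;> fin_cases j <;> simp <;> ring
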